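/- Let f : ℤ^m →ₗ[ℤ] ℤ^n be a ℤ-linear map. The following are equivalent: (a) the cokernel ℤ^n ⧸ range f is a free ℤ-module; (b) for every prime number p, the rank of f over the field ZMod p equals the rank of f over ℚ. (This is the key equivalence, obtained from the Smith normal form of f, underlying the paper's Theorems 1 and 2 relating field-independence of persistence diagrams to freeness of cokernels of the maps H_q(X_m; ℤ) → H_q(X_n; ℤ).) -/

import Mathlib

/-- The rank of a `ℤ`-linear map `f : ℤ^m → ℤ^n` over a field `K` (regarded as a
`ℤ`-algebra): the rank over `K` of the matrix of `f` with entries mapped through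
`ℤ → K`, i.e. the `K`-dimension of the range of the induced `K`-linear map. -/
noncomputable def rankOver {m n : ℕ} (f : (Fin m → ℤ) →ₗ[ℤ] (Fin n → ℤ))
    (K : Type*) [Field K] : ℕ :=
  ((LinearMap.toMatrix (Pi.basisFun ℤ (Fin m)) (Pi.basisFun ℤ (Fin n)) f).map
    (Int.cast : ℤ → K)).rank

open LinearMap Matrix

lemma rankOver_eq_card {m n : ℕ} (f : (Fin m → ℤ) →ₗ[ℤ] (Fin n → ℤ))
    (K : Type*) [Field K] {r : ℕ}
    (bM : Module.Basis (Fin n) ℤ (Fin n → ℤ)) (bN : Module.Basis (Fin r) ℤ (LinearMap.range f))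
    (e : Fin r ↪ Fin n) (a : Fin r → ℤ)
    (hsnf : ∀ i, ((bN i : Fin n → ℤ)) = a i • bM (e i)) :
    rankOver f K = Nat.card {i : Fin r // ((a i : K)) ≠ 0} := by
  classical
  set b0m := Pi.basisFun ℤ (Fin m)
  set b0n := Pi.basisFun ℤ (Fin n)
  set c : ℤ →+* K := Int.castRingHom K
  have hf : f = (LinearMap.range f).subtype ∘ₗ f.rangeRestrict := by ext x; rfl
  set U : Matrix (Fin n) (Fin n) ℤ := LinearMap.toMatrix bM b0n LinearMap.id with hU
  set E : Matrix (Fin n) (Fin r) ℤ := fun j i => if e i = j then 1 else 0 with hE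
  set Q : Matrix (Fin r) (Fin m) ℤ := LinearMap.toMatrix b0m bN f.rangeRestrict with hQ
  have hD : LinearMap.toMatrix bN bM (LinearMap.range f).subtype = E * Matrix.diagonal a := by
    ext j i
    rw [LinearMap.toMatrix_apply, Matrix.mul_diagonal]
    show bM.repr ((bN i : Fin n → ℤ)) j = _
    rw [hsnf i, _root_.map_smul]
    simp [hE, Finsupp.single_apply, mul_comm]
  have hA : LinearMap.toMatrix b0m b0n f = U * (E * Matrix.diagonal a) * Q := by
    conv_lhs => rw [hf]
    rw [LinearMap.toMatrix_comp b0m bN b0n, ← hD]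
    have h2 : (LinearMap.range f).subtype = LinearMap.id ∘ₗ (LinearMap.range f).subtype := rfl
    rw [h2, LinearMap.toMatrix_comp bN bM b0n]
    rfl
  -- U is invertible, even after mapping
  have hUdet : IsUnit ((U.map c).det) := by
    have h1 : U * LinearMap.toMatrix b0n bM LinearMap.id = 1 := by
      rw [hU, ← LinearMap.toMatrix_comp b0n bM b0n]
      simp [LinearMap.toMatrix_id]
    have h2 : (U.map c) * ((LinearMap.toMatrix b0n bM LinearMap.id).map c) = 1 := by
      rw [← Matrix.map_mul, h1, Matrix.map_one c c.map_zero c.map_one]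
    exact Matrix.isUnit_det_of_right_inverse h2
  -- Q has a right inverse, making its mulVecLin surjective
  have hQsurj : Function.Surjective ((Q.map c).mulVecLin) := by
    have hgs : Function.Surjective f.rangeRestrict := f.surjective_rangeRestrict
    set s : (LinearMap.range f) →ₗ[ℤ] (Fin m → ℤ) :=
      bN.constr ℤ (fun i => (hgs (bN i)).choose) with hs
    have hgs2 : f.rangeRestrict ∘ₗ s = LinearMap.id := by
      apply bN.ext
      intro i
      simp only [LinearMap.comp_apply, hs, Module.Basis.constr_basis, LinearMap.id_apply]
      exact (hgs (bN i)).choose_spec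
    set S : Matrix (Fin m) (Fin r) ℤ := LinearMap.toMatrix bN b0m s with hS
    have hQS : Q * S = 1 := by
      rw [hQ, hS, ← LinearMap.toMatrix_comp bN b0m bN, hgs2, LinearMap.toMatrix_id]
    have hQS' : (Q.map c) * (S.map c) = 1 := by
      rw [← Matrix.map_mul, hQS, Matrix.map_one c c.map_zero c.map_one]
    intro y
    refine ⟨(S.map c).mulVec y, ?_⟩
    simp [Matrix.mulVecLin_apply, Matrix.mulVec_mulVec, hQS']
  -- injectivity of (E.map c).mulVecLin
  have hEinj : Function.Injective ((E.map c).mulVecLin) := by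
    intro x y hxy
    funext i
    have := congrFun hxy (e i)
    have hEij : ∀ j k, E j k = if e k = j then 1 else 0 := fun _ _ => rfl
    simp only [Matrix.mulVecLin_apply, Matrix.mulVec, dotProduct, Matrix.map_apply,
      hEij] at this
    rw [Finset.sum_eq_single i, Finset.sum_eq_single i] at this
    · simpa using this
    all_goals first
      | (intro k _ hk; simp [e.injective.ne hk])
      | simp
  -- now compute the rank
  have : rankOver f K = ((U * (E * Matrix.diagonal a) * Q).map c).rank := by
    rw [rankOver]; rw [hA]; rfl
  rw [this]
  rw [show ((U * (E * Matrix.diagonal a) * Q).map c)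
      = (U.map c) * (((E * Matrix.diagonal a) * Q).map c) by
    rw [Matrix.mul_assoc, Matrix.map_mul]]
  rw [Matrix.rank_mul_eq_right_of_isUnit_det _ _ hUdet]
  rw [show (((E * Matrix.diagonal a) * Q).map c)
      = ((E * Matrix.diagonal a).map c) * (Q.map c) from Matrix.map_mul]
  have hrank1 : (((E * Matrix.diagonal a).map c) * (Q.map c)).rank
      = ((E * Matrix.diagonal a).map c).rank := by
    unfold Matrix.rank
    rw [Matrix.mulVecLin_mul, LinearMap.range_comp_of_range_eq_top _
      (LinearMap.range_eq_top.mpr hQsurj)]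
  rw [hrank1]
  rw [show ((E * Matrix.diagonal a).map c) = (E.map c) * ((Matrix.diagonal a).map c)
    from Matrix.map_mul]
  have hrank2 : ((E.map c) * ((Matrix.diagonal a).map c)).rank
      = ((Matrix.diagonal a).map c).rank := by
    unfold Matrix.rank
    rw [Matrix.mulVecLin_mul, LinearMap.range_comp]
    exact (Submodule.equivMapOfInjective _ hEinj _).finrank_eq.symm
  rw [hrank2]
  rw [show ((Matrix.diagonal a).map c) = Matrix.diagonal (fun i => (a i : K)) by
    ext i j; by_cases h : i = j <;> simp [h]]
  rw [Matrix.rank_diagonal]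
  rw [Nat.card_eq_fintype_card]

lemma coker_free_iff_isUnit {m n : ℕ} (f : (Fin m → ℤ) →ₗ[ℤ] (Fin n → ℤ)) {r : ℕ}
    (bM : Module.Basis (Fin n) ℤ (Fin n → ℤ)) (bN : Module.Basis (Fin r) ℤ (LinearMap.range f))
    (e : Fin r ↪ Fin n) (a : Fin r → ℤ)
    (hsnf : ∀ i, ((bN i : Fin n → ℤ)) = a i • bM (e i)) (ha : ∀ i, a i ≠ 0) :
    Module.Free ℤ ((Fin n → ℤ) ⧸ LinearMap.range f) ↔ ∀ i, IsUnit (a i) := by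
  classical
  rw [Module.free_iff_isTorsionFree, show Module.IsTorsionFree ℤ ((Fin n → ℤ) ⧸ LinearMap.range f) ↔
      NoZeroSMulDivisors ℤ ((Fin n → ℤ) ⧸ LinearMap.range f) from
    ⟨fun _ => ⟨fun hcx => smul_eq_zero.mp hcx⟩, fun _ => inferInstance⟩]
  constructor
  · intro hnz i
    have h0 : a i • Submodule.Quotient.mk (p := LinearMap.range f) (bM (e i)) = 0 := by
      rw [← Submodule.Quotient.mk_smul, Submodule.Quotient.mk_eq_zero, ← hsnf i]
      exact (bN i).2
    rcases smul_eq_zero.mp h0 with h | h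
    · exact absurd h (ha i)
    · -- bM (e i) ∈ range f, deduce a i is a unit
      rw [Submodule.Quotient.mk_eq_zero] at h
      set x : LinearMap.range f := ⟨bM (e i), h⟩ with hx
      have hsum : (Finset.univ.sum fun j => bN.repr x j • (bN j : Fin n → ℤ)) = bM (e i) := by
        have := bN.sum_repr x
        calc (Finset.univ.sum fun j => bN.repr x j • (bN j : Fin n → ℤ))
            = ((Finset.univ.sum fun j => bN.repr x j • bN j : LinearMap.range f) :
                Fin n → ℤ) := by
              push_cast; rfl
          _ = bM (e i) := by rw [this]
      have h1 : bM.repr (bM (e i)) (e i) = 1 := by simp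
      rw [← hsum] at h1
      rw [map_sum, Finsupp.coe_finset_sum, Finset.sum_apply] at h1
      have h2 : ∀ j, (bM.repr (bN.repr x j • (bN j : Fin n → ℤ))) (e i)
          = if j = i then bN.repr x j * a j else 0 := by
        intro j
        rw [_root_.map_smul, hsnf j, _root_.map_smul, Finsupp.smul_apply, Finsupp.smul_apply]
        simp only [Module.Basis.repr_self, Finsupp.single_apply, EmbeddingLike.apply_eq_iff_eq]
        by_cases hj : j = i <;> simp [hj, mul_comm]
      rw [Finset.sum_congr rfl fun j _ => h2 j, Finset.sum_ite_eq' _ i] at h1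
      simp only [Finset.mem_univ, if_true] at h1
      exact IsUnit.of_mul_eq_one _ (by rw [mul_comm]; exact h1)
  · intro hu
    have hmul : ∀ i, a i * a i = 1 := fun i => Int.isUnit_mul_self (hu i)
    have hNspan : LinearMap.range f = Submodule.span ℤ (bM '' Set.range e) := by
      have h1 : LinearMap.range f
          = Submodule.span ℤ (Set.range fun i => (bN i : Fin n → ℤ)) := by
        conv_lhs => rw [← Submodule.map_subtype_top (LinearMap.range f), ← bN.span_eq]
        rw [Submodule.map_span, ← Set.range_comp]
        rfl
      rw [h1]
      apply le_antisymm
      · rw [Submodule.span_le]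
        rintro - ⟨i, rfl⟩
        show ((bN i : Fin n → ℤ)) ∈ _
        rw [hsnf i]
        exact Submodule.smul_mem _ _ (Submodule.subset_span ⟨e i, ⟨i, rfl⟩, rfl⟩)
      · rw [Submodule.span_le]
        rintro - ⟨-, ⟨i, rfl⟩, rfl⟩
        have : bM (e i) = a i • ((bN i : Fin n → ℤ)) := by
          rw [hsnf i, smul_smul, hmul i, one_smul]
        rw [this]
        exact Submodule.smul_mem _ _ (Submodule.subset_span ⟨i, rfl⟩)
    refine ⟨fun {c} {x} hcx => ?_⟩
    by_cases hc : c = 0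
    · exact Or.inl hc
    refine Or.inr ?_
    obtain ⟨y, rfl⟩ := Submodule.Quotient.mk_surjective _ x
    rw [← Submodule.Quotient.mk_smul, Submodule.Quotient.mk_eq_zero] at hcx
    rw [Submodule.Quotient.mk_eq_zero]
    rw [hNspan, Module.Basis.mem_span_image] at hcx ⊢
    rwa [_root_.map_smul, Finsupp.support_smul_eq hc] at hcx

/-- For a `ℤ`-linear map `f : ℤ^m → ℤ^n`, the cokernel `ℤ^n ⧸ range f`
is a free `ℤ`-module if and only if for every prime `p` the rank of `f` over `ZMod p`
equals the rank of `f` over `ℚ`. -/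
theorem coker_free_iff_rankOver_eq
    {m n : ℕ} (f : (Fin m → ℤ) →ₗ[ℤ] (Fin n → ℤ)) :
    Module.Free ℤ ((Fin n → ℤ) ⧸ LinearMap.range f) ↔
      ∀ (p : ℕ) [Fact p.Prime], rankOver f (ZMod p) = rankOver f ℚ := by
  classical
  obtain ⟨r, bM, bN, e, a, hsnf⟩ :=
    Submodule.smithNormalForm (Pi.basisFun ℤ (Fin n)) (LinearMap.range f)
  have ha : ∀ i, a i ≠ 0 := by
    intro i hai
    have h0 : (bN i : Fin n → ℤ) = 0 := by rw [hsnf i, hai, zero_smul]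
    exact bN.ne_zero i (ZeroMemClass.coe_eq_zero.mp h0)
  have hQ : rankOver f ℚ = r := by
    rw [rankOver_eq_card f ℚ bM bN e a hsnf]
    rw [Nat.card_congr (Equiv.subtypeUnivEquiv fun i => by
      exact_mod_cast Int.cast_ne_zero.mpr (ha i))]
    simp
  rw [coker_free_iff_isUnit f bM bN e a hsnf ha]
  constructor
  · intro hu p hp
    rw [rankOver_eq_card f (ZMod p) bM bN e a hsnf, hQ]
    rw [Nat.card_congr (Equiv.subtypeUnivEquiv fun i => ?_)]
    · simp
    · intro h0
      have hdvd : (p : ℤ) ∣ a i := (ZMod.intCast_zmod_eq_zero_iff_dvd _ _).mp h0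
      have : IsUnit ((p : ℕ) : ℤ) := isUnit_of_dvd_unit hdvd (hu i)
      rcases Int.isUnit_iff.mp this with h | h
      · exact hp.out.one_lt.ne' (by exact_mod_cast h)
      · omega
  · intro h i
    by_contra hnu
    rw [Int.isUnit_iff_natAbs_eq] at hnu
    obtain ⟨p, hp, hdvd⟩ := Int.exists_prime_and_dvd hnu
    have hq : p.natAbs.Prime := Int.prime_iff_natAbs_prime.mp hp
    haveI : Fact p.natAbs.Prime := ⟨hq⟩
    have hcast : ((a i : ZMod p.natAbs)) = 0 := by
      rw [ZMod.intCast_zmod_eq_zero_iff_dvd]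
      exact Int.natAbs_dvd.mpr hdvd
    have heq := h p.natAbs
    rw [rankOver_eq_card f (ZMod p.natAbs) bM bN e a hsnf, hQ] at heq
    have hlt : Fintype.card {j : Fin r // ((a j : ZMod p.natAbs)) ≠ 0} < r := by
      have := Fintype.card_subtype_lt (p := fun j : Fin r => ((a j : ZMod p.natAbs)) ≠ 0)
        (x := i) (by simpa using hcast)
      simpa using this
    rw [Nat.card_eq_fintype_card] at heq
    omega
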